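/- (Orientation lemma) Let G = (A∪B, E) be a Δ-regular bipartite graph with |A|=|B|=n and eigenvalue ratio γ. Let β̂, α̂ ∈ (0,1] with γ ≤ √(β̂α̂), and suppose β̂Δ/2 and α̂Δ/2 are integers. Let Ê ⊆ E with |Ê| ≤ ((β̂α̂ − γ√(β̂α̂))/(1−γ))·Δn. Then there is an orientation of the edges of Ê such that every vertex of A has at most β̂Δ/2 incoming edges and every vertex of B has at most α̂Δ/2 incoming edges. -/

import Mathlib

open Finset

/-- Orientation lemma: in a Δ-regular bipartite graph (|A| = |B| = n) with eigenvalue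
ratio γ (the expander mixing bound is available as hmix), if β̂, α̂ ∈ (0,1] with
γ ≤ √(β̂α̂), β̂Δ/2 and α̂Δ/2 integers, and Ehat ⊆ E has
|Ehat| ≤ ((β̂α̂ − γ√(β̂α̂))/(1−γ))Δn, then Ehat admits a (β̂/2, α̂/2)-orientation: directions
(`dir e = true` meaning pointed towards the A-endpoint) such that every vertex of A
has at most β̂Δ/2 incoming edges and every vertex of B at most α̂Δ/2 incoming edges. -/
theorem stmt17 {A B E : Type*} [Fintype A] [Fintype B] [Fintype E]
    [DecidableEq A] [DecidableEq B] [DecidableEq E]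
    (endA : E → A) (endB : E → B) (Δ n : ℕ)
    (hregA : ∀ a, (Finset.univ.filter (fun e => endA e = a)).card = Δ)
    (hregB : ∀ b, (Finset.univ.filter (fun e => endB e = b)).card = Δ)
    (hnA : Fintype.card A = n) (hnB : Fintype.card B = n)
    (γ : ℝ) (hγ0 : 0 ≤ γ) (hγ1 : γ < 1)
    (hmix : ∀ (UA : Finset A) (UB : Finset B),
      ((Finset.univ.filter (fun e => endA e ∈ UA ∧ endB e ∈ UB)).card : ℝ) ≤
        ((1 - γ) * ((UA.card : ℝ)/n * ((UB.card : ℝ)/n))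
          + γ * Real.sqrt ((UA.card : ℝ)/n * ((UB.card : ℝ)/n))) * (Δ * n))
    (βh αh : ℝ) (hβ0 : 0 < βh) (hβ1 : βh ≤ 1) (hα0 : 0 < αh) (hα1 : αh ≤ 1)
    (hγβα : γ ≤ Real.sqrt (βh * αh))
    (hintA : ∃ k : ℕ, βh * Δ / 2 = (k : ℝ))
    (hintB : ∃ k : ℕ, αh * Δ / 2 = (k : ℝ))
    (Ehat : Finset E)
    (hsize : (Ehat.card : ℝ) ≤
      (βh * αh - γ * Real.sqrt (βh * αh)) / (1 - γ) * (Δ * n)) :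
    ∃ dir : E → Bool,
      (∀ a : A,
        ((Ehat.filter (fun e => endA e = a ∧ dir e = true)).card : ℝ) ≤ βh * Δ / 2) ∧
      (∀ b : B,
        ((Ehat.filter (fun e => endB e = b ∧ dir e = false)).card : ℝ) ≤ αh * Δ / 2) := by
  classical
  obtain ⟨kA, hkA⟩ := hintA
  obtain ⟨kB, hkB⟩ := hintB
  rcases Nat.eq_zero_or_pos n with hn0 | hn
  · -- n = 0 : A is empty, hence E is empty
    have hAe : IsEmpty A := Fintype.card_eq_zero_iff.mp (hnA.trans hn0)
    have hEe : IsEmpty E := Function.isEmpty endA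
    have hEhat : Ehat = ∅ := Finset.eq_empty_of_isEmpty _
    refine ⟨fun _ => true, ?_, ?_⟩ <;> intro v <;>
      simp [hEhat] <;> positivity
  have hn' : (0:ℝ) < n := by exact_mod_cast hn
  have hΔn : (0:ℝ) ≤ (Δ:ℝ) * n := by positivity
  have h1γ : (0:ℝ) < 1 - γ := by linarith
  set sβα := Real.sqrt (βh * αh) with hsβαdef
  have hsβα0 : 0 ≤ sβα := Real.sqrt_nonneg _
  have hsβαsq : sβα^2 = βh*αh := Real.sq_sqrt (by positivity)
  -- the key counting inequality
  have key : ∀ (UA : Finset A) (UB : Finset B) (m : ℕ),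
      (m : ℝ) ≤ ((univ.filter (fun e => endA e ∈ UA ∧ endB e ∈ UB)).card : ℝ) →
      (m : ℝ) ≤ (Ehat.card : ℝ) →
      (m : ℝ) ≤ (kA : ℝ) * UA.card + (kB : ℝ) * UB.card := by
    intro UA UB m hm1 hm2
    have hmix' := hmix UA UB
    set x : ℝ := (UA.card : ℝ)/n with hxdef
    set y : ℝ := (UB.card : ℝ)/n with hydef
    have hx0 : 0 ≤ x := by positivity
    have hy0 : 0 ≤ y := by positivity
    set s := Real.sqrt (x*y) with hsdef
    have hs0 : 0 ≤ s := Real.sqrt_nonneg _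
    have hssq : s^2 = x*y := Real.sq_sqrt (by positivity)
    have hAM : sβα * s ≤ (βh * x + αh * y)/2 := by
      have h1 : sβα * s = Real.sqrt (βh*x) * Real.sqrt (αh*y) := by
        rw [hsβαdef, hsdef, ← Real.sqrt_mul (by positivity), ← Real.sqrt_mul (by positivity)]
        ring_nf
      have hp : Real.sqrt (βh*x)^2 = βh*x := Real.sq_sqrt (by positivity)
      have hq : Real.sqrt (αh*y)^2 = αh*y := Real.sq_sqrt (by positivity)
      nlinarith [sq_nonneg (Real.sqrt (βh*x) - Real.sqrt (αh*y))]
    have hRHS : (βh*x + αh*y)/2 * ((Δ:ℝ)*n) = (kA:ℝ)*UA.card + (kB:ℝ)*UB.card := by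
      rw [← hkA, ← hkB, hxdef, hydef]
      field_simp
    by_cases hcase : (1-γ)*s + γ ≤ sβα
    · have hb : ((1-γ)*(x*y) + γ*s) * ((Δ:ℝ)*n) ≤ (βh*x+αh*y)/2 * ((Δ:ℝ)*n) := by
        apply mul_le_mul_of_nonneg_right _ hΔn
        calc (1-γ)*(x*y) + γ*s = ((1-γ)*s + γ)*s := by rw [← hssq]; ring
          _ ≤ sβα * s := mul_le_mul_of_nonneg_right hcase hs0
          _ ≤ _ := hAM
      calc (m:ℝ) ≤ _ := hm1
        _ ≤ _ := hmix'
        _ ≤ (βh*x+αh*y)/2 * ((Δ:ℝ)*n) := hb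
        _ = _ := hRHS
    · push_neg at hcase
      have h1 : (βh*αh - γ*sβα)/(1-γ) = sβα * ((sβα - γ)/(1-γ)) := by
        rw [← hsβαsq]; field_simp
      have h2 : (sβα - γ)/(1-γ) ≤ s := by
        rw [div_le_iff₀ h1γ]
        linarith
      calc (m:ℝ) ≤ (Ehat.card : ℝ) := hm2
        _ ≤ (βh*αh - γ*sβα)/(1-γ) * ((Δ:ℝ)*n) := hsize
        _ = sβα * ((sβα-γ)/(1-γ)) * ((Δ:ℝ)*n) := by rw [h1]
        _ ≤ sβα * s * ((Δ:ℝ)*n) :=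
            mul_le_mul_of_nonneg_right (mul_le_mul_of_nonneg_left h2 hsβα0) hΔn
        _ ≤ (βh*x+αh*y)/2 * ((Δ:ℝ)*n) := mul_le_mul_of_nonneg_right hAM hΔn
        _ = _ := hRHS
  -- Hall's theorem setup
  set t : {e // e ∈ Ehat} → Finset ((A × Fin kA) ⊕ (B × Fin kB)) := fun e =>
    ((univ : Finset (Fin kA)).image (fun i => Sum.inl (endA e.1, i))) ∪
    ((univ : Finset (Fin kB)).image (fun i => Sum.inr (endB e.1, i))) with htdef
  have hall : ∀ S : Finset {e // e ∈ Ehat}, S.card ≤ (S.biUnion t).card := by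
    intro S
    set UA := S.image (fun e => endA e.1) with hUAdef
    set UB := S.image (fun e => endB e.1) with hUBdef
    have hsub : ((UA ×ˢ (univ : Finset (Fin kA))).map ⟨Sum.inl, Sum.inl_injective⟩) ∪
        ((UB ×ˢ (univ : Finset (Fin kB))).map ⟨Sum.inr, Sum.inr_injective⟩) ⊆ S.biUnion t := by
      intro z hz
      rcases Finset.mem_union.mp hz with hz | hz
      · obtain ⟨⟨a, i⟩, hmem, rfl⟩ := Finset.mem_map.mp hz
        obtain ⟨ha, -⟩ := Finset.mem_product.mp hmem
        obtain ⟨e, he, rfl⟩ := Finset.mem_image.mp ha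
        exact Finset.mem_biUnion.mpr ⟨e, he, Finset.mem_union_left _
          (Finset.mem_image.mpr ⟨i, Finset.mem_univ _, rfl⟩)⟩
      · obtain ⟨⟨b, i⟩, hmem, rfl⟩ := Finset.mem_map.mp hz
        obtain ⟨hb, -⟩ := Finset.mem_product.mp hmem
        obtain ⟨e, he, rfl⟩ := Finset.mem_image.mp hb
        exact Finset.mem_biUnion.mpr ⟨e, he, Finset.mem_union_right _
          (Finset.mem_image.mpr ⟨i, Finset.mem_univ _, rfl⟩)⟩
    have hdisj : Disjoint ((UA ×ˢ (univ : Finset (Fin kA))).map ⟨Sum.inl, Sum.inl_injective⟩)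
        ((UB ×ˢ (univ : Finset (Fin kB))).map ⟨Sum.inr, Sum.inr_injective⟩) := by
      simp only [Finset.disjoint_left, Finset.mem_map, Function.Embedding.coeFn_mk]
      rintro z ⟨p, -, rfl⟩ ⟨q, -, h⟩
      exact Sum.inl_ne_inr h.symm
    have hcard : UA.card * kA + UB.card * kB ≤ (S.biUnion t).card := by
      have h := Finset.card_le_card hsub
      rwa [Finset.card_union_of_disjoint hdisj, Finset.card_map, Finset.card_map,
        Finset.card_product, Finset.card_product, Finset.card_univ, Finset.card_univ,
        Fintype.card_fin, Fintype.card_fin] at h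
    have hm1 : (S.card : ℝ) ≤ ((univ.filter (fun e => endA e ∈ UA ∧ endB e ∈ UB)).card : ℝ) := by
      have h : S.card ≤ (univ.filter (fun e : E => endA e ∈ UA ∧ endB e ∈ UB)).card := by
        apply Finset.card_le_card_of_injOn (fun e => e.1)
        · intro e he
          simp only [Finset.coe_filter, Finset.mem_coe, Set.mem_setOf_eq, Finset.mem_filter, Finset.mem_univ, true_and]
          exact ⟨Finset.mem_image_of_mem _ he, Finset.mem_image_of_mem _ he⟩
        · intro e _ e' _ h; exact Subtype.ext h
      exact_mod_cast h
    have hm2 : (S.card : ℝ) ≤ (Ehat.card : ℝ) := by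
      have h : S.card ≤ Ehat.card := by
        apply Finset.card_le_card_of_injOn (fun e => e.1)
        · intro e _; exact e.2
        · intro e _ e' _ h; exact Subtype.ext h
      exact_mod_cast h
    have hk := key UA UB S.card hm1 hm2
    have h2 : S.card ≤ UA.card * kA + UB.card * kB := by
      have : (S.card : ℝ) ≤ ((UA.card * kA + UB.card * kB : ℕ) : ℝ) := by
        push_cast; linarith
      exact_mod_cast this
    omega
  obtain ⟨f, hfinj, hft⟩ := (Finset.all_card_le_biUnion_card_iff_exists_injective t).mp hall
  -- analyze f
  have hleft : ∀ (e : {e // e ∈ Ehat}), (f e).isLeft = true →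
      ∃ i : Fin kA, f e = Sum.inl (endA e.1, i) := by
    intro e hL
    have hm := hft e
    rw [htdef] at hm
    rcases Finset.mem_union.mp hm with hm | hm
    · obtain ⟨i, -, hi⟩ := Finset.mem_image.mp hm
      exact ⟨i, hi.symm⟩
    · obtain ⟨i, -, hi⟩ := Finset.mem_image.mp hm
      rw [← hi] at hL; simp at hL
  have hright : ∀ (e : {e // e ∈ Ehat}), (f e).isLeft = false →
      ∃ i : Fin kB, f e = Sum.inr (endB e.1, i) := by
    intro e hL
    have hm := hft e
    rw [htdef] at hm
    rcases Finset.mem_union.mp hm with hm | hm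
    · obtain ⟨i, -, hi⟩ := Finset.mem_image.mp hm
      rw [← hi] at hL; simp at hL
    · obtain ⟨i, -, hi⟩ := Finset.mem_image.mp hm
      exact ⟨i, hi.symm⟩
  refine ⟨fun e => if h : e ∈ Ehat then (f ⟨e, h⟩).isLeft else true, ?_, ?_⟩
  · intro a
    rw [hkA]
    have hc : (Ehat.filter (fun e => endA e = a ∧
        (if h : e ∈ Ehat then (f ⟨e, h⟩).isLeft else true) = true)).card ≤ kA := by
      have hcr := Finset.card_range kA
      refine le_trans (Finset.card_le_card_of_injOn
        (fun e => if h : e ∈ Ehat then ((f ⟨e, h⟩).getLeft?.map (fun p => (p.2 : ℕ))).getD 0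
          else 0) ?_ ?_) hcr.le
      · intro e he
        obtain ⟨heE, -, hdir⟩ := Finset.mem_filter.mp he
        simp only [dif_pos heE] at hdir ⊢
        obtain ⟨i, hi⟩ := hleft ⟨e, heE⟩ hdir
        simp only [hi, Sum.getLeft?, Option.map_some, Option.getD_some]
        exact Finset.mem_range.mpr i.2
      · intro e he e' he' hg
        obtain ⟨heE, -, hdir⟩ := Finset.mem_filter.mp he
        obtain ⟨heE', -, hdir'⟩ := Finset.mem_filter.mp he'
        rw [dif_pos heE] at hdir
        rw [dif_pos heE'] at hdir'
        simp only [dif_pos heE, dif_pos heE'] at hg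
        obtain ⟨i, hi⟩ := hleft ⟨e, heE⟩ hdir
        obtain ⟨i', hi'⟩ := hleft ⟨e', heE'⟩ hdir'
        simp only [hi, hi', Sum.getLeft?, Option.map_some, Option.getD_some] at hg
        have hii : i = i' := Fin.ext hg
        have hfe : f ⟨e, heE⟩ = f ⟨e', heE'⟩ := by
          rw [hi, hi', hii]
          have : endA e = endA e' := by
            obtain ⟨-, h1, -⟩ := Finset.mem_filter.mp he
            obtain ⟨-, h2, -⟩ := Finset.mem_filter.mp he'
            rw [h1, h2]
          rw [this]
        exact congrArg Subtype.val (hfinj hfe)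
    exact_mod_cast hc
  · intro b
    rw [hkB]
    have hc : (Ehat.filter (fun e => endB e = b ∧
        (if h : e ∈ Ehat then (f ⟨e, h⟩).isLeft else true) = false)).card ≤ kB := by
      have hcr := Finset.card_range kB
      refine le_trans (Finset.card_le_card_of_injOn
        (fun e => if h : e ∈ Ehat then ((f ⟨e, h⟩).getRight?.map (fun p => (p.2 : ℕ))).getD 0
          else 0) ?_ ?_) hcr.le
      · intro e he
        obtain ⟨heE, -, hdir⟩ := Finset.mem_filter.mp he
        simp only [dif_pos heE] at hdir ⊢
        obtain ⟨i, hi⟩ := hright ⟨e, heE⟩ hdir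
        simp only [hi, Sum.getRight?, Option.map_some, Option.getD_some]
        exact Finset.mem_range.mpr i.2
      · intro e he e' he' hg
        obtain ⟨heE, -, hdir⟩ := Finset.mem_filter.mp he
        obtain ⟨heE', -, hdir'⟩ := Finset.mem_filter.mp he'
        rw [dif_pos heE] at hdir
        rw [dif_pos heE'] at hdir'
        simp only [dif_pos heE, dif_pos heE'] at hg
        obtain ⟨i, hi⟩ := hright ⟨e, heE⟩ hdir
        obtain ⟨i', hi'⟩ := hright ⟨e', heE'⟩ hdir'
        simp only [hi, hi', Sum.getRight?, Option.map_some, Option.getD_some] at hg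
        have hii : i = i' := Fin.ext hg
        have hfe : f ⟨e, heE⟩ = f ⟨e', heE'⟩ := by
          rw [hi, hi', hii]
          have : endB e = endB e' := by
            obtain ⟨-, h1, -⟩ := Finset.mem_filter.mp he
            obtain ⟨-, h2, -⟩ := Finset.mem_filter.mp he'
            rw [h1, h2]
          rw [this]
        exact congrArg Subtype.val (hfinj hfe)
    exact_mod_cast hc
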